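/- The sensitivity index of R0 with respect to μ, i.e., (μ/R0)·∂R0/∂μ, is strictly negative whenever all parameters λ, γ, d0, η, μ, σ, h are strictly positive. -/

import Mathlib

/-- The sensitivity index of `R0` with respect to `μ` is strictly negative. -/
theorem sensitivity_mu_neg
    (lam γ d0 η μ σ h : ℝ)
    (hlam : 0 < lam) (hγ : 0 < γ) (hd0 : 0 < d0) (hη : 0 < η)
    (hμ : 0 < μ) (hσ : 0 < σ) (hh : 0 < h)
    (R0 : ℝ → ℝ)
    (hR0 : ∀ m : ℝ, R0 m =
      γ * lam * (d0 + m + σ) / (d0 * (d0 + m + σ) * (d0 + h) + η * (d0 + m))) :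
    μ / R0 μ * deriv R0 μ < 0 := by
  have hfun : R0 = fun m : ℝ =>
      γ * lam * (d0 + m + σ) / (d0 * (d0 + m + σ) * (d0 + h) + η * (d0 + m)) :=
    funext hR0
  have hbase : HasDerivAt (fun m : ℝ => d0 + m + σ) 1 μ := by
    simpa using ((hasDerivAt_id μ).const_add d0).add_const σ
  have hf : HasDerivAt (fun m : ℝ => γ * lam * (d0 + m + σ)) (γ * lam) μ := by
    simpa using hbase.const_mul (γ * lam)
  have hg : HasDerivAt (fun m : ℝ => d0 * (d0 + m + σ) * (d0 + h) + η * (d0 + m))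
      (d0 * (d0 + h) + η) μ := by
    have h1 : HasDerivAt (fun m : ℝ => d0 * (d0 + m + σ) * (d0 + h)) (d0 * (d0 + h)) μ := by
      simpa using (hbase.const_mul d0).mul_const (d0 + h)
    have h2 : HasDerivAt (fun m : ℝ => η * (d0 + m)) η μ := by
      simpa using ((hasDerivAt_id μ).const_add d0).const_mul η
    exact h1.add h2
  have hgpos : 0 < d0 * (d0 + μ + σ) * (d0 + h) + η * (d0 + μ) := by positivity
  have hg0 : d0 * (d0 + μ + σ) * (d0 + h) + η * (d0 + μ) ≠ 0 := ne_of_gt hgpos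
  have hdiv := hf.div hg hg0
  have hderiv : deriv R0 μ =
      (γ * lam * (d0 * (d0 + μ + σ) * (d0 + h) + η * (d0 + μ)) -
        γ * lam * (d0 + μ + σ) * (d0 * (d0 + h) + η)) /
      (d0 * (d0 + μ + σ) * (d0 + h) + η * (d0 + μ)) ^ 2 := by
    rw [hfun]; exact hdiv.deriv
  have hnum : γ * lam * (d0 * (d0 + μ + σ) * (d0 + h) + η * (d0 + μ)) -
      γ * lam * (d0 + μ + σ) * (d0 * (d0 + h) + η) = -(γ * lam * η * σ) := by ring
  have hR0pos : 0 < R0 μ := by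
    rw [hR0 μ]; positivity
  have hdneg : deriv R0 μ < 0 := by
    rw [hderiv, hnum]
    apply div_neg_of_neg_of_pos
    · have : 0 < γ * lam * η * σ := by positivity
      linarith
    · positivity
  exact mul_neg_of_pos_of_neg (by positivity) hdneg
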